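/- Given the partitioned source latent matrix Z^{s} = (U_0^T, U^T)^T ∈ ℝ^{(n+m)×k} with J₁U_0 = U_0 (J₁ the n×n centering matrix) and J₂U = U (J₂ the m×m centering matrix), if (U_0', U') also satisfy these centering constraints, U_0 has full column rank, and α 1^T + 1 α^T + Z^s Z^{sT} = α' 1^T + 1 α'^T + Z^{s'} Z^{s'T} where Z^{s'} = (U_0'^T, U'^T)^T, then α = α' and there exists an orthogonal O ∈ ℝ^{k×k} with U_0' = U_0 O and U' = U O. -/

import Mathlib

open Matrix

/-- If `A Aᵀ = B Bᵀ` and `A` has trivial kernel, then `B = A O` for an orthogonal `O`. -/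
lemma exists_orthogonal_of_gram_eq {ι κ : Type*} [Fintype ι] [Fintype κ] [DecidableEq κ]
    (A B : Matrix ι κ ℝ) (hinj : ∀ x : κ → ℝ, A *ᵥ x = 0 → x = 0)
    (hGram : A * Aᵀ = B * Bᵀ) :
    ∃ O : Matrix κ κ ℝ, O * Oᵀ = 1 ∧ Oᵀ * O = 1 ∧ B = A * O := by
  have hGunit : IsUnit (Aᵀ * A) := by
    rw [← Matrix.mulVec_injective_iff_isUnit]
    intro x y hxy
    have hx : (Aᵀ * A) *ᵥ (x - y) = 0 := by
      rw [Matrix.mulVec_sub, hxy, sub_self]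
    have h0 : (A *ᵥ (x - y)) ⬝ᵥ (A *ᵥ (x - y)) = 0 := by
      have h : (x - y) ⬝ᵥ ((Aᵀ * A) *ᵥ (x - y)) = 0 := by rw [hx]; simp
      rwa [← Matrix.mulVec_mulVec, Matrix.dotProduct_mulVec,
        Matrix.vecMul_transpose] at h
    have := hinj _ (dotProduct_self_eq_zero.mp h0)
    exact sub_eq_zero.mp this
  have hdet : IsUnit (Aᵀ * A).det := (Matrix.isUnit_iff_isUnit_det _).mp hGunit
  have hGG : (Aᵀ * A)⁻¹ * (Aᵀ * A) = 1 := Matrix.nonsing_inv_mul _ hdet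
  have hGG' : (Aᵀ * A) * (Aᵀ * A)⁻¹ = 1 := Matrix.mul_nonsing_inv _ hdet
  have hGisymm : ((Aᵀ * A)⁻¹)ᵀ = (Aᵀ * A)⁻¹ := by
    rw [Matrix.transpose_nonsing_inv, transpose_mul, transpose_transpose]
  -- key prefix facts (all products left-associated)
  have hGiAA : (Aᵀ * A)⁻¹ * Aᵀ * A = 1 := by rw [Matrix.mul_assoc]; exact hGG
  have hABB : Aᵀ * B * Bᵀ = Aᵀ * A * Aᵀ := by
    rw [Matrix.mul_assoc, Matrix.mul_assoc, hGram]
  have hABB' : Aᵀ * (B * Bᵀ) = (Aᵀ * A) * Aᵀ := by rw [← Matrix.mul_assoc, hABB]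
  have hP1 : A * (Aᵀ * A)⁻¹ * Aᵀ * B * Bᵀ = B * Bᵀ := by
    calc A * (Aᵀ * A)⁻¹ * Aᵀ * B * Bᵀ
        = A * ((Aᵀ * A)⁻¹ * (Aᵀ * (B * Bᵀ))) := by simp only [Matrix.mul_assoc]
      _ = A * ((Aᵀ * A)⁻¹ * ((Aᵀ * A) * Aᵀ)) := by rw [hABB']
      _ = A * (((Aᵀ * A)⁻¹ * (Aᵀ * A)) * Aᵀ) := by
          rw [← Matrix.mul_assoc ((Aᵀ * A)⁻¹) (Aᵀ * A) Aᵀ]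
      _ = A * Aᵀ := by rw [hGG, Matrix.one_mul]
      _ = B * Bᵀ := hGram
  have hOOt : ((Aᵀ * A)⁻¹ * (Aᵀ * B)) * ((Aᵀ * A)⁻¹ * (Aᵀ * B))ᵀ = 1 := by
    rw [transpose_mul, hGisymm, transpose_mul, transpose_transpose]
    calc (Aᵀ * A)⁻¹ * (Aᵀ * B) * (Bᵀ * A * (Aᵀ * A)⁻¹)
        = (Aᵀ * A)⁻¹ * (Aᵀ * B * Bᵀ) * (A * (Aᵀ * A)⁻¹) := by
          simp only [Matrix.mul_assoc]
      _ = (Aᵀ * A)⁻¹ * (Aᵀ * A * Aᵀ) * (A * (Aᵀ * A)⁻¹) := by rw [hABB]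
      _ = ((Aᵀ * A)⁻¹ * (Aᵀ * A)) * ((Aᵀ * A) * (Aᵀ * A)⁻¹) := by
          simp only [Matrix.mul_assoc]
      _ = 1 := by rw [hGG, hGG', one_mul]
  have hD : (B - A * (Aᵀ * A)⁻¹ * Aᵀ * B) * (B - A * (Aᵀ * A)⁻¹ * Aᵀ * B)ᵀ = 0 := by
    have hexp : (B - A * (Aᵀ * A)⁻¹ * Aᵀ * B) * (B - A * (Aᵀ * A)⁻¹ * Aᵀ * B)ᵀ
        = B * Bᵀ - B * Bᵀ * A * (Aᵀ * A)⁻¹ * Aᵀ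
          - A * (Aᵀ * A)⁻¹ * Aᵀ * B * Bᵀ
          + A * (Aᵀ * A)⁻¹ * Aᵀ * B * Bᵀ * A * (Aᵀ * A)⁻¹ * Aᵀ := by
      simp only [Matrix.transpose_sub, Matrix.transpose_mul, Matrix.transpose_transpose,
        hGisymm, Matrix.sub_mul, Matrix.mul_sub, ← Matrix.mul_assoc]
      abel
    rw [hexp, hP1]
    abel
  have hD0 : B - A * (Aᵀ * A)⁻¹ * Aᵀ * B = 0 := by
    have h := (Matrix.self_mul_conjTranspose_eq_zero
      (A := B - A * (Aᵀ * A)⁻¹ * Aᵀ * B)).mp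
    rw [Matrix.conjTranspose_eq_transpose_of_trivial] at h
    exact h hD
  have hB : B = A * (Aᵀ * A)⁻¹ * (Aᵀ * B) := by
    exact (sub_eq_zero.mp hD0).trans (Matrix.mul_assoc _ _ _)
  exact ⟨(Aᵀ * A)⁻¹ * (Aᵀ * B), hOOt, mul_eq_one_comm.mp hOOt, hB.trans (Matrix.mul_assoc _ _ _)⟩


/-- Core of Proposition 1: identifiability for a partitioned source latent matrix
`Zˢ = (U₀ᵀ, Uᵀ)ᵀ` with both blocks column-centered and `U₀` of full column rank.
If two such parameterizations give the same `Θ = α 1ᵀ + 1 αᵀ + Zˢ Zˢᵀ`, then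
`α = α'` and `U₀' = U₀ O`, `U' = U O` for a common orthogonal `O`. -/
theorem partitioned_lsm_identifiability (n m k : ℕ) (hn : 1 ≤ n) (hm : 1 ≤ m)
    (α α' : (Fin n ⊕ Fin m) → ℝ)
    (U₀ U₀' : Matrix (Fin n) (Fin k) ℝ) (U U' : Matrix (Fin m) (Fin k) ℝ)
    (hU₀ : vecMul (fun _ => (1 : ℝ)) U₀ = 0)
    (hU₀' : vecMul (fun _ => (1 : ℝ)) U₀' = 0)
    (hU : vecMul (fun _ => (1 : ℝ)) U = 0)
    (hU' : vecMul (fun _ => (1 : ℝ)) U' = 0)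
    (hrank : U₀.rank = k)
    (Zs Zs' : Matrix (Fin n ⊕ Fin m) (Fin k) ℝ)
    (hZs : Zs = fromRows U₀ U) (hZs' : Zs' = fromRows U₀' U')
    (heq : vecMulVec α (fun _ => (1 : ℝ)) + vecMulVec (fun _ => (1 : ℝ)) α + Zs * Zsᵀ
         = vecMulVec α' (fun _ => (1 : ℝ)) + vecMulVec (fun _ => (1 : ℝ)) α' + Zs' * Zs'ᵀ) :
    α = α' ∧ ∃ O : Matrix (Fin k) (Fin k) ℝ,
      O * Oᵀ = 1 ∧ Oᵀ * O = 1 ∧ U₀' = U₀ * O ∧ U' = U * O := by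
  -- the all-ones vector is orthogonal to the columns of Zs and Zs'
  have hone : (fun _ => (1 : ℝ) : (Fin n ⊕ Fin m) → ℝ)
      = Sum.elim (fun _ : Fin n => (1 : ℝ)) (fun _ : Fin m => (1 : ℝ)) := by
    funext x; cases x <;> rfl
  have hZe : vecMul (fun _ => (1 : ℝ)) Zs = 0 := by
    rw [hZs, hone, sumElim_vecMul_fromRows, hU₀, hU, add_zero]
  have hZe' : vecMul (fun _ => (1 : ℝ)) Zs' = 0 := by
    rw [hZs', hone, sumElim_vecMul_fromRows, hU₀', hU', add_zero]
  -- row sums of the Gram parts vanish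
  have hrow : ∀ i, ∑ j, (Zs * Zsᵀ) i j = 0 := by
    intro i
    have h : ((Zs * Zsᵀ) *ᵥ (fun _ => (1 : ℝ))) i = 0 := by
      rw [← Matrix.mulVec_mulVec, Matrix.mulVec_transpose, hZe, Matrix.mulVec_zero]; rfl
    simpa [Matrix.mulVec, dotProduct] using h
  have hrow' : ∀ i, ∑ j, (Zs' * Zs'ᵀ) i j = 0 := by
    intro i
    have h : ((Zs' * Zs'ᵀ) *ᵥ (fun _ => (1 : ℝ))) i = 0 := by
      rw [← Matrix.mulVec_mulVec, Matrix.mulVec_transpose, hZe', Matrix.mulVec_zero]; rfl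
    simpa [Matrix.mulVec, dotProduct] using h
  -- α = α'
  set c : ℝ := (Fintype.card (Fin n ⊕ Fin m) : ℝ) with hc
  have hcpos : 0 < c := by
    rw [hc]
    have : 0 < Fintype.card (Fin n ⊕ Fin m) := by simp; omega
    exact_mod_cast this
  have key : ∀ i, c * α i + (∑ j, α j) = c * α' i + (∑ j, α' j) := by
    intro i
    have hsum := congrArg (fun M : Matrix (Fin n ⊕ Fin m) (Fin n ⊕ Fin m) ℝ =>
      ∑ j, M i j) heq
    simp only at hsum
    simp only [Matrix.add_apply, Matrix.vecMulVec_apply, mul_one, one_mul,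
      Finset.sum_add_distrib, Finset.sum_const, Finset.card_univ, nsmul_eq_mul,
      hrow i, hrow' i, add_zero] at hsum
    exact hsum
  have hs : (∑ j, α j) = ∑ j, α' j := by
    have h := Finset.sum_congr rfl (fun i (_ : i ∈ Finset.univ) => key i)
    simp only [Finset.sum_add_distrib, ← Finset.mul_sum, Finset.sum_const,
      Finset.card_univ, nsmul_eq_mul, ← hc] at h
    nlinarith [h]
  have hα : α = α' := by
    funext i
    have h := key i
    rw [hs] at h
    have := add_right_cancel h
    exact mul_left_cancel₀ (ne_of_gt hcpos) this
  -- Gram matrices agree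
  have hGram : Zs * Zsᵀ = Zs' * Zs'ᵀ := by
    rw [hα] at heq
    exact add_left_cancel heq
  -- Zs has trivial kernel
  have hker : LinearMap.ker U₀.mulVecLin = ⊥ := by
    have h1 : U₀.rank + Module.finrank ℝ (LinearMap.ker U₀.mulVecLin)
        = Module.finrank ℝ (Fin k → ℝ) := LinearMap.finrank_range_add_finrank_ker _
    rw [hrank, Module.finrank_fintype_fun_eq_card, Fintype.card_fin] at h1
    have h2 : Module.finrank ℝ (LinearMap.ker U₀.mulVecLin) = 0 := by omega
    exact Submodule.finrank_eq_zero.mp h2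
  have hinj : ∀ x : Fin k → ℝ, Zs *ᵥ x = 0 → x = 0 := by
    intro x hx
    rw [hZs, fromRows_mulVec] at hx
    have h₀ : U₀ *ᵥ x = 0 := by funext i; exact congrFun hx (Sum.inl i)
    have hxmem : x ∈ LinearMap.ker U₀.mulVecLin := by
      rw [LinearMap.mem_ker, Matrix.mulVecLin_apply]; exact h₀
    rw [hker, Submodule.mem_bot] at hxmem
    exact hxmem
  obtain ⟨O, hO1, hO2, hB⟩ := exists_orthogonal_of_gram_eq Zs Zs' hinj hGram
  rw [hZs, hZs', fromRows_mul] at hB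
  have hblocks := (fromRows_ext_iff _ _ _ _).mp hB
  exact ⟨hα, O, hO1, hO2, hblocks.1, hblocks.2⟩
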